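/- arXiv:1502.05990 — 4 statements merged into one kernel-verified Lean document; each statement's English description precedes it below -/
import Mathlib

section
/- Let w1 ≥ w2 ≥ w3 > 0 and f(p1,p2,p3) = p1*p2*p3*(w1*p1 + w2*p2 + w3*p3) on the simplex {pi ≥ 0, p1+p2+p3 = 1}. If (p1,p2,p3) maximizes f on the simplex, then 0 < p3 ≤ p2 ≤ p1 < 1. -/
theorem stmt2 (w1 w2 w3 : ℝ) (hw3 : 0 < w3) (h32 : w3 ≤ w2) (h21 : w2 ≤ w1)
    (p1 p2 p3 : ℝ) (hp1 : 0 ≤ p1) (hp2 : 0 ≤ p2) (hp3 : 0 ≤ p3)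
    (hsum : p1 + p2 + p3 = 1)
    (hmax : ∀ q1 q2 q3 : ℝ, 0 ≤ q1 → 0 ≤ q2 → 0 ≤ q3 → q1 + q2 + q3 = 1 →
      q1*q2*q3*(w1*q1 + w2*q2 + w3*q3) ≤ p1*p2*p3*(w1*p1 + w2*p2 + w3*p3)) :
    0 < p3 ∧ p3 ≤ p2 ∧ p2 ≤ p1 ∧ p1 < 1 := by
  have hpos : (0:ℝ) < p1*p2*p3*(w1*p1 + w2*p2 + w3*p3) := by
    have h := hmax (1/3) (1/3) (1/3) (by norm_num) (by norm_num) (by norm_num) (by norm_num)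
    nlinarith
  have hw : 0 < w1*p1 + w2*p2 + w3*p3 := by
    by_contra h
    push_neg at h
    nlinarith [mul_nonneg (mul_nonneg hp1 hp2) hp3]
  have hp1' : 0 < p1 := hp1.lt_of_ne (fun h => by rw [← h] at hpos; simp at hpos)
  have hp2' : 0 < p2 := hp2.lt_of_ne (fun h => by rw [← h] at hpos; simp at hpos)
  have hp3' : 0 < p3 := hp3.lt_of_ne (fun h => by rw [← h] at hpos; simp at hpos)
  have h23 : p3 ≤ p2 := by
    by_contra h
    push_neg at h
    have hq := hmax p1 ((p2+p3)/2) ((p2+p3)/2) hp1 (by linarith) (by linarith) (by linarith)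
    nlinarith [mul_pos hp1' hw, mul_pos (mul_pos hp1' (mul_pos (sub_pos.2 h) (sub_pos.2 h))) hw,
      mul_nonneg (mul_nonneg hp1 (mul_nonneg hp2 hp3)) (mul_nonneg (sub_nonneg.2 h32) (sub_pos.2 h).le)]
  have h12 : p2 ≤ p1 := by
    by_contra h
    push_neg at h
    have hq := hmax ((p1+p2)/2) ((p1+p2)/2) p3 (by linarith) (by linarith) hp3 (by linarith)
    nlinarith [mul_pos hp3' hw, mul_pos (mul_pos hp3' (mul_pos (sub_pos.2 h) (sub_pos.2 h))) hw,
      mul_nonneg (mul_nonneg hp3 (mul_nonneg hp1 hp2)) (mul_nonneg (sub_nonneg.2 h21) (sub_pos.2 h).le)]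
  exact ⟨hp3', h23, h12, by linarith⟩
end

section
/- Suppose 0 < w3 < w2 < w1. Define c0 = w3*(w2 - w3), c1 = 3*w1*w2 - w1*w3 - 4*w2*w3 + 2*w3^2, c2 = 2*w1^2 - 4*w1*w2 - w1*w3 + 3*w2*w3, c3 = w1*(w2 - w1). Then the cubic equation c0 + c1*y + c2*y^2 + c3*y^3 = 0 has exactly one real root y ≥ 1, and this root satisfies y > 1. -/
lemma stmt3_uniq (c0 c1 c2 c3 a b : ℝ) (hc0 : 0 < c0) (hc1 : 0 < c1) (hc3 : c3 < 0)
    (ha1 : 1 ≤ a) (hb1 : 1 ≤ b)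
    (ha : c0 + c1*a + c2*a^2 + c3*a^3 = 0)
    (hb : c0 + c1*b + c2*b^2 + c3*b^3 = 0) : a = b := by
  by_contra hne
  have hab : a - b ≠ 0 := sub_ne_zero.2 hne
  have hkey : c1 + c2*(a+b) + c3*(a^2+a*b+b^2) = 0 := by
    have h : (a - b) * (c1 + c2*(a+b) + c3*(a^2+a*b+b^2)) = 0 := by
      linear_combination ha - hb
    exact (mul_eq_zero.1 h).resolve_left hab
  have hC0 : c0 = a*b*(c2 + c3*(a+b)) := by linear_combination ha - a * hkey
  have hX : 0 < c2 + c3*(a+b) := by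
    rcases lt_or_ge 0 (c2 + c3*(a+b)) with h | h
    · exact h
    · nlinarith [mul_pos (show (0:ℝ) < a by linarith) (show (0:ℝ) < b by linarith)]
  have hC1 : c1 = -(a+b)*(c2 + c3*(a+b)) + c3*(a*b) := by linear_combination hkey
  nlinarith [mul_pos (show (0:ℝ) < a+b by linarith) hX,
    mul_pos (show (0:ℝ) < a by linarith) (show (0:ℝ) < b by linarith)]

theorem stmt3 (w1 w2 w3 : ℝ) (hw3 : 0 < w3) (h32 : w3 < w2) (h21 : w2 < w1) :
    let c0 := w3*(w2 - w3)
    let c1 := 3*w1*w2 - w1*w3 - 4*w2*w3 + 2*w3^2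
    let c2 := 2*w1^2 - 4*w1*w2 - w1*w3 + 3*w2*w3
    let c3 := w1*(w2 - w1)
    (∃! y : ℝ, 1 ≤ y ∧ c0 + c1*y + c2*y^2 + c3*y^3 = 0) ∧
    (∀ y : ℝ, 1 ≤ y → c0 + c1*y + c2*y^2 + c3*y^3 = 0 → 1 < y) := by
  intro c0 c1 c2 c3
  have e0 : c0 = w3*(w2 - w3) := rfl
  have e1 : c1 = 3*w1*w2 - w1*w3 - 4*w2*w3 + 2*w3^2 := rfl
  have e2 : c2 = 2*w1^2 - 4*w1*w2 - w1*w3 + 3*w2*w3 := rfl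
  have e3 : c3 = w1*(w2 - w1) := rfl
  have hc0 : 0 < c0 := by rw [e0]; nlinarith
  have hc1 : 0 < c1 := by
    rw [e1]
    nlinarith [mul_pos (sub_pos.2 h32) hw3, mul_pos (sub_pos.2 h21) (sub_pos.2 h32),
      mul_pos (sub_pos.2 h21) hw3, mul_pos (sub_pos.2 h32) (sub_pos.2 h32)]
  have hc3 : c3 < 0 := by rw [e3]; nlinarith
  have hf1 : c0 + c1*1 + c2*1^2 + c3*1^3 = (w1 - w3)^2 := by
    rw [e0, e1, e2, e3]; ring
  clear_value c0 c1 c2 c3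
  clear e0 e1 e2 e3
  set g : ℝ → ℝ := fun y => c0 + c1*y + c2*y^2 + c3*y^3 with hg
  have hg1 : 0 < g 1 := by
    have h : g 1 = (w1 - w3)^2 := by simp only [hg]; exact hf1
    rw [h]
    have : w1 - w3 ≠ 0 := by nlinarith
    positivity
  -- choose B large with g B < 0
  have hc3' : 0 < -c3 := by linarith
  obtain ⟨B, hB2, hq⟩ : ∃ B : ℝ, 2 ≤ B ∧ c3 * B < -(c0 + c1 + |c2|) := by
    refine ⟨max 2 ((c0 + c1 + |c2|) / (-c3) + 1), le_max_left _ _, ?_⟩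
    set B' := max 2 ((c0 + c1 + |c2|) / (-c3) + 1) with hB'
    have h1 : (c0 + c1 + |c2|) / (-c3) < B' := by
      have := le_max_right 2 ((c0 + c1 + |c2|) / (-c3) + 1)
      linarith
    have := (div_lt_iff₀ hc3').1 h1
    nlinarith
  have hB1 : 1 ≤ B := by linarith
  have hgB : g B < 0 := by
    have hB0 : (0:ℝ) < B := by linarith
    have hBsq : (1:ℝ) ≤ B^2 := by nlinarith
    have hBsq' : B ≤ B^2 := by nlinarith
    have h2 : c2 ≤ |c2| := le_abs_self c2
    have t1 : c0 ≤ c0 * B^2 := by nlinarith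
    have t2 : c1 * B ≤ c1 * B^2 := by nlinarith
    have t3 : c2 * B^2 ≤ |c2| * B^2 := by nlinarith
    have t4 : (c3*B)*B^2 < -(c0 + c1 + |c2|) * B^2 :=
      mul_lt_mul_of_pos_right hq (by nlinarith)
    have : g B = c0 + c1*B + c2*B^2 + (c3*B)*B^2 := by simp only [hg]; ring
    rw [this]
    nlinarith
  have hcont : ContinuousOn g (Set.Icc 1 B) := by
    apply Continuous.continuousOn
    simp only [hg]
    fun_prop
  have hsub := intermediate_value_Icc' hB1 hcont
  have hmem : (0:ℝ) ∈ Set.Icc (g B) (g 1) := ⟨le_of_lt hgB, le_of_lt hg1⟩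
  obtain ⟨y, hy, hgy⟩ := hsub hmem
  have hy1 : 1 ≤ y := hy.1
  have key : ∀ z : ℝ, 1 ≤ z → c0 + c1*z + c2*z^2 + c3*z^3 = 0 → 1 < z := by
    intro z hz hzeq
    rcases lt_or_eq_of_le hz with h | h
    · exact h
    · exfalso
      have : g 1 = 0 := by simp only [hg]; rw [← h] at hzeq; simpa using hzeq
      linarith
  refine ⟨⟨y, ⟨hy1, hgy⟩, ?_⟩, key⟩
  intro z hz
  exact stmt3_uniq c0 c1 c2 c3 z y hc0 hc1 hc3 hz.1 hy1 hz.2 hgy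
end

section
/- Let w1 > w2 (both positive) and w3 = w2, and consider maximizing f(p1,p2,p3) = p1*p2*p3*(w1*p1 + w2*p2 + w3*p3) over the 2-simplex. Setting Δ1 = 2*w1 - 3*w2 + sqrt(4*w1^2 - 4*w1*w2 + 9*w2^2), the point p1* = Δ1/(4*w1 + Δ1), p2* = p3* = 2*w1/(4*w1 + Δ1) is a critical point of f on the simplex, i.e., the three partial derivatives of f are equal there. -/
theorem stmt6 (w1 w2 w3 : ℝ) (hw2 : 0 < w2) (h21 : w2 < w1) (h32 : w3 = w2) :
    let Δ1 := 2*w1 - 3*w2 + Real.sqrt (4*w1^2 - 4*w1*w2 + 9*w2^2)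
    let p1 := Δ1 / (4*w1 + Δ1)
    let p2 := 2*w1 / (4*w1 + Δ1)
    let p3 := 2*w1 / (4*w1 + Δ1)
    p1 + p2 + p3 = 1 ∧
    p2*p3*(2*w1*p1 + w2*p2 + w3*p3) = p1*p3*(w1*p1 + 2*w2*p2 + w3*p3) ∧
    p1*p3*(w1*p1 + 2*w2*p2 + w3*p3) = p1*p2*(w1*p1 + w2*p2 + 2*w3*p3) := by
  intro Δ1 p1 p2 p3
  set s := Real.sqrt (4*w1^2 - 4*w1*w2 + 9*w2^2) with hs
  have hs0 : 0 ≤ s := Real.sqrt_nonneg _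
  have hs2 : s^2 = 4*w1^2 - 4*w1*w2 + 9*w2^2 := Real.sq_sqrt (by nlinarith)
  have hD : 4*w1 + Δ1 ≠ 0 := by
    have : (0:ℝ) < 4*w1 + Δ1 := by simp only [Δ1]; nlinarith
    linarith
  subst h32
  refine ⟨?_, ?_, ?_⟩ <;> simp only [p1, p2, p3, Δ1] at *
  · rw [← hs] at hD ⊢
    rw [← add_div, ← add_div, div_eq_one_iff_eq hD]
    ring
  · rw [← hs] at hD ⊢
    have hD' : w1*4 + (2*w1 - 3*w3 + s) ≠ 0 := fun h => hD (by linarith)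
    field_simp
    nlinarith [hs2, hs0, sq_nonneg s]
  · rw [← hs] at hD ⊢
    field_simp
    ring_nf
end

section
/- Under the same setup (π_t > 0, g_s > 0, tridiagonal matrix A3 with diagonal u_t = g_t^2(1/π_t + 1/π_{t+1}) and off-diagonal -b_t = -g_{t-1}g_t/π_t), the matrix A3 is positive definite. -/
open scoped Matrix

private lemma sumaux (n : ℕ) (x : Fin n → ℝ) (c : ℝ) (m : ℕ) :
    (∑ k : Fin n, if (k : ℕ) + 1 = m then c * x k else 0)
      = c * (if h : 1 ≤ m ∧ m ≤ n then x ⟨m - 1, by omega⟩ else 0) := by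
  by_cases h : 1 ≤ m ∧ m ≤ n
  · rw [dif_pos h, Finset.sum_eq_single (⟨m - 1, by omega⟩ : Fin n)]
    · rw [if_pos (by simp; omega)]
    · intro k _ hk
      rw [if_neg]
      intro hc
      exact hk (Fin.ext (show (k : ℕ) = m - 1 by omega))
    · simp
  · rw [dif_neg h, mul_zero]
    apply Finset.sum_eq_zero
    intro k _
    rw [if_neg]
    have := k.isLt
    omega

theorem stmt12 (J : ℕ) (hJ : 2 ≤ J) (pi g : ℕ → ℝ)
    (hpi : ∀ t, 1 ≤ t → t ≤ J → 0 < pi t)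
    (hg : ∀ s, 1 ≤ s → s ≤ J - 1 → 0 < g s)
    (hg0 : g 0 = 0) (hgJ : g J = 0)
    (A3 : Matrix (Fin (J-1)) (Fin (J-1)) ℝ)
    (hA : ∀ i j : Fin (J-1), A3 i j =
      if (i : ℕ) = (j : ℕ) then (g ((i : ℕ)+1))^2 * (1/pi ((i : ℕ)+1) + 1/pi ((i : ℕ)+2))
      else if (i : ℕ) + 1 = (j : ℕ) then -(g (j : ℕ) * g ((j : ℕ)+1) / pi ((j : ℕ)+1))
      else if (j : ℕ) + 1 = (i : ℕ) then -(g (i : ℕ) * g ((i : ℕ)+1) / pi ((i : ℕ)+1))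
      else 0) :
    A3.PosDef := by
  have hpi' : ∀ r : ℕ, r < J → 0 < pi (r + 1) := fun r hr => hpi (r + 1) (by omega) (by omega)
  have hs : ∀ r : ℕ, r < J → 0 < Real.sqrt (pi (r + 1)) :=
    fun r hr => Real.sqrt_pos.mpr (hpi' r hr)
  have hss : ∀ r : ℕ, r < J → Real.sqrt (pi (r + 1)) * Real.sqrt (pi (r + 1)) = pi (r + 1) :=
    fun r hr => Real.mul_self_sqrt (hpi' r hr).le
  set B : Matrix (Fin J) (Fin (J - 1)) ℝ := fun r i =>
    (if (i : ℕ) + 1 = (r : ℕ) then g (r : ℕ) else if (i : ℕ) = (r : ℕ) then -g ((r : ℕ) + 1)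
      else 0) / Real.sqrt (pi ((r : ℕ) + 1)) with hB
  -- the factorization
  have hfact : A3 = Bᵀ * B := by
    ext i j
    have hiJ : (i : ℕ) < J := by have := i.isLt; omega
    have hi1 : (i : ℕ) + 1 < J := by have := i.isLt; omega
    have hval0 : ((⟨(i : ℕ), hiJ⟩ : Fin J) : ℕ) = (i : ℕ) := rfl
    have hval1 : ((⟨(i : ℕ) + 1, hi1⟩ : Fin J) : ℕ) = (i : ℕ) + 1 := rfl
    have hne : (⟨(i : ℕ), hiJ⟩ : Fin J) ≠ ⟨(i : ℕ) + 1, hi1⟩ := by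
      rw [Ne, Fin.ext_iff]; omega
    have hsum : (Bᵀ * B) i j =
        B ⟨(i : ℕ), hiJ⟩ i * B ⟨(i : ℕ), hiJ⟩ j
          + B ⟨(i : ℕ) + 1, hi1⟩ i * B ⟨(i : ℕ) + 1, hi1⟩ j := by
      rw [Matrix.mul_apply]
      simp only [Matrix.transpose_apply]
      have hzero : ∀ r ∈ Finset.univ,
          r ∉ ({(⟨(i : ℕ), hiJ⟩ : Fin J), ⟨(i : ℕ) + 1, hi1⟩} : Finset (Fin J)) →
          B r i * B r j = 0 := by
        intro r _ hr
        simp only [Finset.mem_insert, Finset.mem_singleton] at hr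
        push_neg at hr
        have h1 : ¬((i : ℕ) = (r : ℕ)) := by
          intro h
          exact hr.1 (by apply Fin.ext; exact h.symm)
        have h2 : ¬((i : ℕ) + 1 = (r : ℕ)) := by
          intro h
          exact hr.2 (by apply Fin.ext; exact h.symm)
        simp only [hB]
        rw [if_neg h2, if_neg h1, zero_div, zero_mul]
      rw [← Finset.sum_subset (Finset.subset_univ _) hzero, Finset.sum_pair hne]
    have e1 : B ⟨(i : ℕ), hiJ⟩ i = -g ((i : ℕ) + 1) / Real.sqrt (pi ((i : ℕ) + 1)) := by
      simp only [hB, hval0]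
      rw [if_neg (show ¬((i : ℕ) + 1 = (i : ℕ)) by omega)]
      simp
    have e2 : B ⟨(i : ℕ) + 1, hi1⟩ i = g ((i : ℕ) + 1) / Real.sqrt (pi ((i : ℕ) + 1 + 1)) := by
      simp only [hB, hval1]
      simp
    by_cases hij : (i : ℕ) = (j : ℕ)
    · have e3 : B ⟨(i : ℕ), hiJ⟩ j = -g ((i : ℕ) + 1) / Real.sqrt (pi ((i : ℕ) + 1)) := by
        simp only [hB, hval0]
        rw [if_neg (show ¬((j : ℕ) + 1 = (i : ℕ)) by omega), if_pos hij.symm]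
      have e4 : B ⟨(i : ℕ) + 1, hi1⟩ j = g ((i : ℕ) + 1) / Real.sqrt (pi ((i : ℕ) + 1 + 1)) := by
        simp only [hB, hval1]
        rw [if_pos (by omega)]
      rw [hA, if_pos hij, hsum, e1, e2, e3, e4, div_mul_div_comm, div_mul_div_comm,
        hss (i : ℕ) hiJ, hss ((i : ℕ) + 1) hi1]
      have h1 : pi ((i : ℕ) + 1) ≠ 0 := (hpi' _ hiJ).ne'
      have h2 : pi ((i : ℕ) + 1 + 1) ≠ 0 := (hpi' _ hi1).ne'
      have h3 : (i : ℕ) + 2 = (i : ℕ) + 1 + 1 := rfl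
      rw [h3]
      field_simp
    · by_cases hij2 : (i : ℕ) + 1 = (j : ℕ)
      · have e3 : B ⟨(i : ℕ), hiJ⟩ j = 0 := by
          simp only [hB, hval0]
          rw [if_neg (by omega), if_neg (by omega), zero_div]
        have e4 : B ⟨(i : ℕ) + 1, hi1⟩ j =
            -g ((i : ℕ) + 1 + 1) / Real.sqrt (pi ((i : ℕ) + 1 + 1)) := by
          simp only [hB, hval1]
          rw [if_neg (by omega), if_pos hij2.symm]
        rw [hA, if_neg hij, if_pos hij2, hsum, e1, e2, e3, e4, ← hij2, mul_zero, zero_add,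
          div_mul_div_comm, hss ((i : ℕ) + 1) hi1]
        ring
      · by_cases hij3 : (j : ℕ) + 1 = (i : ℕ)
        · have e3 : B ⟨(i : ℕ), hiJ⟩ j = g (i : ℕ) / Real.sqrt (pi ((i : ℕ) + 1)) := by
            simp only [hB, hval0]
            rw [if_pos hij3]
          have e4 : B ⟨(i : ℕ) + 1, hi1⟩ j = 0 := by
            simp only [hB, hval1]
            rw [if_neg (by omega), if_neg (by omega), zero_div]
          rw [hA, if_neg hij, if_neg hij2, if_pos hij3, hsum, e1, e2, e3, e4, mul_zero, add_zero,
            div_mul_div_comm, hss (i : ℕ) hiJ]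
          ring
        · have e3 : B ⟨(i : ℕ), hiJ⟩ j = 0 := by
            simp only [hB, hval0]
            rw [if_neg (by omega), if_neg (by omega), zero_div]
          have e4 : B ⟨(i : ℕ) + 1, hi1⟩ j = 0 := by
            simp only [hB, hval1]
            rw [if_neg (by omega), if_neg (by omega), zero_div]
          rw [hA, if_neg hij, if_neg hij2, if_neg hij3, hsum, e3, e4, mul_zero, mul_zero, add_zero]
  -- row formula
  set X : (Fin (J - 1) → ℝ) → ℕ → ℝ := fun x m =>
    if h : 1 ≤ m ∧ m ≤ J - 1 then x ⟨m - 1, by omega⟩ else 0 with hX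
  have hrow : ∀ (x : Fin (J - 1) → ℝ) (r : Fin J),
      (B *ᵥ x) r = (g (r : ℕ) * X x (r : ℕ) - g ((r : ℕ) + 1) * X x ((r : ℕ) + 1))
        / Real.sqrt (pi ((r : ℕ) + 1)) := by
    intro x r
    have step : ∀ k : Fin (J - 1), B r k * x k =
        ((if (k : ℕ) + 1 = (r : ℕ) then g (r : ℕ) * x k else 0)
          + (if (k : ℕ) + 1 = (r : ℕ) + 1 then -g ((r : ℕ) + 1) * x k else 0))
          / Real.sqrt (pi ((r : ℕ) + 1)) := by
      intro k
      simp only [hB]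
      have hkr : ((k : ℕ) + 1 = (r : ℕ) + 1) ↔ ((k : ℕ) = (r : ℕ)) := by omega
      split_ifs <;> first | ring1 | (exfalso; omega)
    show (∑ k, B r k * x k) = _
    rw [Finset.sum_congr rfl (fun k _ => step k), ← Finset.sum_div, Finset.sum_add_distrib,
      sumaux, sumaux]
    simp only [hX]
    ring
  -- injectivity of B
  have hinj : ∀ x : Fin (J - 1) → ℝ, B *ᵥ x = 0 → x = 0 := by
    intro x hx
    have key : ∀ m : ℕ, X x m = 0 := by
      intro m
      induction m with
      | zero => simp only [hX]; rw [dif_neg (by omega)]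
      | succ n ih =>
        by_cases hn : n + 1 ≤ J - 1
        · have hnJ : n < J := by omega
          have h0 : (g n * X x n - g (n + 1) * X x (n + 1))
              / Real.sqrt (pi (n + 1)) = 0 := by
            have h1 := hrow x ⟨n, hnJ⟩
            rw [hx] at h1
            exact h1.symm
          rw [div_eq_zero_iff] at h0
          rcases h0 with h0 | h0
          · rw [ih, mul_zero, zero_sub, neg_eq_zero, mul_eq_zero] at h0
            rcases h0 with h0 | h0
            · exact absurd h0 (hg (n + 1) (by omega) hn).ne'
            · exact h0
          · exact absurd h0 (hs n hnJ).ne'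
        · simp only [hX]; rw [dif_neg (by omega)]
    funext i
    have h2 := key ((i : ℕ) + 1)
    simp only [hX] at h2
    rw [dif_pos ⟨by omega, by have := i.isLt; omega⟩] at h2
    have h3 : (⟨(i : ℕ) + 1 - 1, by omega⟩ : Fin (J - 1)) = i :=
      Fin.ext (show (i : ℕ) + 1 - 1 = (i : ℕ) by omega)
    rw [h3] at h2
    exact h2
  have hBH : Bᴴ = Bᵀ := Matrix.conjTranspose_eq_transpose_of_trivial B
  refine Matrix.posDef_iff_dotProduct_mulVec.mpr ⟨?_, ?_⟩
  · rw [hfact, ← hBH]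
    exact Matrix.isHermitian_conjTranspose_mul_self B
  · intro x hx
    have hv : B *ᵥ x ≠ 0 := fun h => hx (hinj x h)
    have hcalc : star x ⬝ᵥ (A3 *ᵥ x) = (B *ᵥ x) ⬝ᵥ (B *ᵥ x) := by
      rw [star_trivial, hfact, ← Matrix.mulVec_mulVec, Matrix.dotProduct_mulVec,
        Matrix.vecMul_transpose]
    rw [hcalc]
    have hnn : 0 ≤ (B *ᵥ x) ⬝ᵥ (B *ᵥ x) :=
      Finset.sum_nonneg fun k _ => mul_self_nonneg _
    rcases hnn.lt_or_eq with h | h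
    · exact h
    · exact absurd (dotProduct_self_eq_zero.mp h.symm) hv
end
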